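/- arXiv:1407.7680 — 3 statements merged into one kernel-verified Lean document; each statement's English description precedes it below -/
import Mathlib

section
/- Let W₁, …, W_N be k-dimensional subspaces of ℝᵈ with orthogonal projections P₁, …, P_N, and let λ = max_{i≠j} ‖PᵢPⱼ‖ (operator norm). Then λ² ≥ (kN − d)/(dN − d), provided N ≥ 2. -/
open scoped RealInnerProductSpace
open Finset


private lemma stmt_5_arith (dR kR NR lam : ℝ) (hd : 1 ≤ dR) (hN : 2 ≤ NR) (hk : 0 ≤ kR)
    (main : (kR * NR) ^ 2 ≤ dR * (NR * kR + NR * (NR - 1) * (kR * lam ^ 2))) :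
    (kR * NR - dR) / (dR * NR - dR) ≤ lam ^ 2 := by
  have hden : 0 < dR * NR - dR := by nlinarith
  rw [div_le_iff₀ hden]
  rcases le_or_gt (kR * NR) dR with h | h
  · have h0 : 0 ≤ lam ^ 2 * (dR * NR - dR) := mul_nonneg (sq_nonneg lam) hden.le
    linarith
  · have hkN : 0 < kR * NR := by linarith
    have h' : (kR * NR) * (kR * NR - dR) ≤ (kR * NR) * (lam ^ 2 * (dR * NR - dR)) := by
      nlinarith [main]
    have := le_of_mul_le_mul_left h' hkN
    linarith

/-- Lower bound on the coherence parameter: if `W₁, …, W_N` are `k`-dimensional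
subspaces of ℝᵈ with orthogonal projections `Pⱼ`, and `λ` bounds `‖Pᵢ Pⱼ‖` for all
`i ≠ j` (in particular if `λ = max_{i≠j} ‖Pᵢ Pⱼ‖`), then
`λ² ≥ (kN − d)/(dN − d)` whenever `N ≥ 2`. -/
theorem stmt_5 (d k N : ℕ) (hd : 0 < d) (hN : 2 ≤ N)
    (W : Fin N → Submodule ℝ (EuclideanSpace ℝ (Fin d)))
    (hk : ∀ j, Module.finrank ℝ (W j) = k)
    (P : Fin N → (EuclideanSpace ℝ (Fin d) →L[ℝ] EuclideanSpace ℝ (Fin d)))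
    (hP : ∀ j, P j = (W j).subtypeL.comp (Submodule.orthogonalProjection (W j)))
    (lam : ℝ) (hlam : ∀ i j, i ≠ j → ‖(P i).comp (P j)‖ ≤ lam) :
    ((k : ℝ) * N - d) / ((d : ℝ) * N - d) ≤ lam ^ 2 := by
  classical
  have hi01 : (⟨0, by omega⟩ : Fin N) ≠ ⟨1, by omega⟩ := by simp [Fin.ext_iff]
  have hlam0 : 0 ≤ lam := le_trans (norm_nonneg _) (hlam _ _ hi01)
  have hPapp : ∀ j x, P j x = ↑(Submodule.orthogonalProjection (W j) x) := by
    intro j x; rw [hP]; rfl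
  have hPmem : ∀ j x, P j x ∈ W j := by
    intro j x; rw [hPapp]; exact (Submodule.orthogonalProjection (W j) x).2
  have hPid : ∀ j (x : EuclideanSpace ℝ (Fin d)), x ∈ W j → P j x = x := by
    intro j x hx
    rw [hPapp]
    have : Submodule.orthogonalProjection (W j) (((⟨x, hx⟩ : W j) : EuclideanSpace ℝ (Fin d)))
        = ⟨x, hx⟩ := Submodule.orthogonalProjectionOnto_mem_subspace_eq_self _
    simpa using congrArg Subtype.val this
  have hPsa : ∀ j (x y : EuclideanSpace ℝ (Fin d)), ⟪P j x, y⟫ = ⟪x, P j y⟫ := by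
    intro j x y
    rw [hPapp, hPapp]
    exact Submodule.inner_starProjection_left_eq_right (W j) x y
  have hPnn : ∀ j (x : EuclideanSpace ℝ (Fin d)), ⟪P j x, x⟫ = ‖P j x‖ ^ 2 := by
    intro j x
    have h1 : P j (P j x) = P j x := hPid j _ (hPmem j x)
    calc ⟪P j x, x⟫ = ⟪P j (P j x), x⟫ := by rw [h1]
      _ = ⟪P j x, P j x⟫ := hPsa j _ x
      _ = ‖P j x‖ ^ 2 := real_inner_self_eq_norm_sq _
  let b : ∀ j, OrthonormalBasis (Fin k) ℝ (W j) := fun j =>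
    (stdOrthonormalBasis ℝ (W j)).reindex (finCongr (hk j))
  let e : OrthonormalBasis (Fin d) ℝ (EuclideanSpace ℝ (Fin d)) :=
    EuclideanSpace.basisFun (Fin d) ℝ
  have hbnorm1 : ∀ j m, ‖((b j m : EuclideanSpace ℝ (Fin d)))‖ = 1 := by
    intro j m
    exact (b j).orthonormal.1 m
  have hbnorm : ∀ j m, ⟪(b j m : EuclideanSpace ℝ (Fin d)),
      (b j m : EuclideanSpace ℝ (Fin d))⟫ = 1 := by
    intro j m
    rw [real_inner_self_eq_norm_sq, hbnorm1]
    norm_num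
  have hProjSum : ∀ j (x : EuclideanSpace ℝ (Fin d)),
      P j x = ∑ m : Fin k, ⟪(b j m : EuclideanSpace ℝ (Fin d)), x⟫
        • (b j m : EuclideanSpace ℝ (Fin d)) := by
    intro j x
    rw [hPapp, (b j).orthogonalProjectionOnto_apply_eq_sum]
    push_cast
    rfl
  -- key trace identity against a projection
  have L1 : ∀ (j : Fin N) (A : EuclideanSpace ℝ (Fin d) →L[ℝ] EuclideanSpace ℝ (Fin d)),
      ∑ l : Fin d, ⟪A (P j (e l)), e l⟫
        = ∑ m : Fin k, ⟪A (b j m : EuclideanSpace ℝ (Fin d)),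
            (b j m : EuclideanSpace ℝ (Fin d))⟫ := by
    intro j A
    have hterm : ∀ l, ⟪A (P j (e l)), e l⟫
        = ∑ m : Fin k, ⟪A (b j m : EuclideanSpace ℝ (Fin d)), e l⟫
            * ⟪e l, (b j m : EuclideanSpace ℝ (Fin d))⟫ := by
      intro l
      rw [hProjSum, map_sum, sum_inner]
      refine Finset.sum_congr rfl fun m _ => ?_
      rw [map_smul]
      rw [real_inner_smul_left, real_inner_comm (b j m : EuclideanSpace ℝ (Fin d)) (e l)]
      ring
    rw [Finset.sum_congr rfl fun l _ => hterm l, Finset.sum_comm]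
    exact Finset.sum_congr rfl fun m _ => e.sum_inner_mul_inner _ _
  have htrP : ∀ j, ∑ l : Fin d, ⟪P j (e l), e l⟫ = k := by
    intro j
    have := L1 j (ContinuousLinearMap.id ℝ (EuclideanSpace ℝ (Fin d)))
    simpa [hbnorm, hbnorm1] using this
  have htrPsq : ∀ j, ∑ l : Fin d, ⟪P j (P j (e l)), e l⟫ = k := by
    intro j
    rw [L1 j (P j)]
    have hbb : ∀ m : Fin k, P j (b j m : EuclideanSpace ℝ (Fin d))
        = (b j m : EuclideanSpace ℝ (Fin d)) := fun m => hPid j _ (b j m).2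
    simp [hbb, hbnorm, hbnorm1]
  have htrPP : ∀ i j, i ≠ j →
      ∑ l : Fin d, ⟪P i (P j (e l)), e l⟫ ≤ (k : ℝ) * lam ^ 2 := by
    intro i j hij
    rw [L1 j (P i)]
    have hb : ∀ m : Fin k, ⟪P i (b j m : EuclideanSpace ℝ (Fin d)),
        (b j m : EuclideanSpace ℝ (Fin d))⟫ ≤ lam ^ 2 := by
      intro m
      rw [hPnn]
      have h1 : P i (b j m : EuclideanSpace ℝ (Fin d))
          = ((P i).comp (P j)) (b j m : EuclideanSpace ℝ (Fin d)) := by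
        rw [ContinuousLinearMap.comp_apply, hPid j _ (b j m).2]
      have h2 : ‖P i (b j m : EuclideanSpace ℝ (Fin d))‖ ≤ lam := by
        rw [h1]
        calc ‖((P i).comp (P j)) (b j m : EuclideanSpace ℝ (Fin d))‖
            ≤ ‖(P i).comp (P j)‖ * ‖(b j m : EuclideanSpace ℝ (Fin d))‖ :=
              ContinuousLinearMap.le_opNorm _ _
          _ = ‖(P i).comp (P j)‖ := by rw [hbnorm1, mul_one]
          _ ≤ lam := hlam i j hij
      exact pow_le_pow_left₀ (norm_nonneg _) h2 2
    calc ∑ m : Fin k, ⟪P i (b j m : EuclideanSpace ℝ (Fin d)),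
          (b j m : EuclideanSpace ℝ (Fin d))⟫
        ≤ ∑ _m : Fin k, lam ^ 2 := Finset.sum_le_sum fun m _ => hb m
      _ = (k : ℝ) * lam ^ 2 := by
          rw [Finset.sum_const, card_univ, Fintype.card_fin, nsmul_eq_mul]
  -- the sum operator
  set Q : EuclideanSpace ℝ (Fin d) →L[ℝ] EuclideanSpace ℝ (Fin d) := ∑ j, P j with hQ
  have hQapp : ∀ x, Q x = ∑ j, P j x := by
    intro x; rw [hQ]; simp
  have hQsa : ∀ x y : EuclideanSpace ℝ (Fin d), ⟪Q x, y⟫ = ⟪x, Q y⟫ := by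
    intro x y
    rw [hQapp, hQapp, sum_inner, inner_sum]
    exact Finset.sum_congr rfl fun j _ => hPsa j x y
  have hT1 : ∑ l : Fin d, ⟪Q (e l), e l⟫ = (k : ℝ) * N := by
    have h1 : ∀ l, ⟪Q (e l), e l⟫ = ∑ j, ⟪P j (e l), e l⟫ := by
      intro l; rw [hQapp, sum_inner]
    rw [Finset.sum_congr rfl fun l _ => h1 l, Finset.sum_comm,
      Finset.sum_congr rfl fun j _ => htrP j, Finset.sum_const, card_univ,
      Fintype.card_fin, nsmul_eq_mul]
    ring
  have hT2 : ∑ l : Fin d, ‖Q (e l)‖ ^ 2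
      ≤ (N : ℝ) * k + (N : ℝ) * ((N : ℝ) - 1) * ((k : ℝ) * lam ^ 2) := by
    have hterm : ∀ l, ‖Q (e l)‖ ^ 2 = ∑ i, ∑ j, ⟪P i (P j (e l)), e l⟫ := by
      intro l
      calc ‖Q (e l)‖ ^ 2 = ⟪Q (e l), Q (e l)⟫ := (real_inner_self_eq_norm_sq _).symm
        _ = ⟪Q (Q (e l)), e l⟫ := (hQsa (Q (e l)) (e l)).symm
        _ = ∑ i, ∑ j, ⟪P i (P j (e l)), e l⟫ := by
            rw [hQapp, sum_inner]
            refine Finset.sum_congr rfl fun i _ => ?_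
            rw [hQapp (e l), map_sum, sum_inner]
    rw [Finset.sum_congr rfl fun l _ => hterm l, Finset.sum_comm]
    have hrow : ∀ i : Fin N, ∑ j, ∑ l : Fin d, ⟪P i (P j (e l)), e l⟫
        ≤ (k : ℝ) + ((N : ℝ) - 1) * ((k : ℝ) * lam ^ 2) := by
      intro i
      have hswap : ∀ i : Fin N, ∑ l : Fin d, ∑ j, ⟪P i (P j (e l)), e l⟫
          = ∑ j, ∑ l : Fin d, ⟪P i (P j (e l)), e l⟫ := fun i => Finset.sum_comm
      rw [← Finset.add_sum_erase univ _ (mem_univ i)]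
      have h1 : ∑ l : Fin d, ⟪P i (P i (e l)), e l⟫ = (k : ℝ) := htrPsq i
      have h2 : ∑ j ∈ univ.erase i, ∑ l : Fin d, ⟪P i (P j (e l)), e l⟫
          ≤ ((N : ℝ) - 1) * ((k : ℝ) * lam ^ 2) := by
        calc ∑ j ∈ univ.erase i, ∑ l : Fin d, ⟪P i (P j (e l)), e l⟫
            ≤ ∑ _j ∈ univ.erase i, (k : ℝ) * lam ^ 2 :=
              Finset.sum_le_sum fun j hj => htrPP i j (Ne.symm (Finset.ne_of_mem_erase hj))
          _ = ((N : ℝ) - 1) * ((k : ℝ) * lam ^ 2) := by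
              rw [Finset.sum_const, Finset.card_erase_of_mem (mem_univ i), card_univ,
                Fintype.card_fin, nsmul_eq_mul, Nat.cast_sub (by omega : 1 ≤ N), Nat.cast_one]
      linarith
    have hswap2 : (∑ l : Fin d, ∑ i, ∑ j, ⟪P i (P j (e l)), e l⟫)
        = ∑ i, ∑ j, ∑ l : Fin d, ⟪P i (P j (e l)), e l⟫ := by
      rw [Finset.sum_comm]
      exact Finset.sum_congr rfl fun i _ => Finset.sum_comm
    calc ∑ i, ∑ l : Fin d, ∑ j, ⟪P i (P j (e l)), e l⟫
        = ∑ i, ∑ j, ∑ l : Fin d, ⟪P i (P j (e l)), e l⟫ :=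
          Finset.sum_congr rfl fun i _ => Finset.sum_comm
      _ ≤ ∑ _i : Fin N, ((k : ℝ) + ((N : ℝ) - 1) * ((k : ℝ) * lam ^ 2)) :=
          Finset.sum_le_sum fun i _ => hrow i
      _ = (N : ℝ) * k + (N : ℝ) * ((N : ℝ) - 1) * ((k : ℝ) * lam ^ 2) := by
          rw [Finset.sum_const, card_univ, Fintype.card_fin, nsmul_eq_mul]; ring
  -- Cauchy–Schwarz
  have hCS : ((k : ℝ) * N) ^ 2 ≤ (d : ℝ) * ∑ l : Fin d, ‖Q (e l)‖ ^ 2 := by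
    have h1 : ∀ l : Fin d, ⟪Q (e l), e l⟫ ≤ ‖Q (e l)‖ := by
      intro l
      calc ⟪Q (e l), e l⟫ ≤ ‖Q (e l)‖ * ‖e l‖ := real_inner_le_norm _ _
        _ = ‖Q (e l)‖ := by rw [e.orthonormal.1 l, mul_one]
    have h2 : (k : ℝ) * N ≤ ∑ l : Fin d, ‖Q (e l)‖ := by
      rw [← hT1]; exact Finset.sum_le_sum fun l _ => h1 l
    have h3 : (∑ l : Fin d, ‖Q (e l)‖) ^ 2 ≤ (d : ℝ) * ∑ l : Fin d, ‖Q (e l)‖ ^ 2 := by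
      have := Finset.sum_mul_sq_le_sq_mul_sq univ (fun _ : Fin d => (1 : ℝ))
        (fun l => ‖Q (e l)‖)
      simpa [mul_comm] using this
    have h0 : (0 : ℝ) ≤ (k : ℝ) * N := by positivity
    calc ((k : ℝ) * N) ^ 2 ≤ (∑ l : Fin d, ‖Q (e l)‖) ^ 2 := pow_le_pow_left₀ h0 h2 2
      _ ≤ _ := h3
  have main : ((k : ℝ) * N) ^ 2
      ≤ (d : ℝ) * ((N : ℝ) * k + (N : ℝ) * ((N : ℝ) - 1) * ((k : ℝ) * lam ^ 2)) :=
    le_trans hCS (mul_le_mul_of_nonneg_left hT2 (by positivity))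
  -- arithmetic
  have hdR : (1 : ℝ) ≤ d := by exact_mod_cast hd
  have hNR : (2 : ℝ) ≤ N := by exact_mod_cast hN
  exact stmt_5_arith (d : ℝ) (k : ℝ) (N : ℝ) lam hdR hNR (Nat.cast_nonneg k) main
end

section
/- Let A ∈ ℝ^{m×N} and let A_I = A ⊗ I_d be the Kronecker product with the d×d identity. If A satisfies (1−δ)‖u‖₂² ≤ ‖Au‖₂² ≤ (1+δ)‖u‖₂² for all s-sparse u ∈ ℝᴺ, then for every collection of subspaces W₁,…,W_N ⊂ ℝᵈ and every block s-sparse x = (x₁,…,x_N) with xⱼ ∈ Wⱼ, one has (1−δ)‖x‖₂² ≤ ‖A_I x‖₂² ≤ (1+δ)‖x‖₂². -/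
/-- The classical restricted isometry constant of `A` dominates the fusion restricted
isometry constant of `A_I = A ⊗ I_d`: if `(1−δ)‖u‖² ≤ ‖Au‖² ≤ (1+δ)‖u‖²` for all
`s`-sparse `u ∈ ℝᴺ`, then for any subspaces `W₁, …, W_N ⊆ ℝᵈ` and any block `s`-sparse
`x` with `xⱼ ∈ Wⱼ`, `(1−δ)‖x‖² ≤ ‖A_I x‖² ≤ (1+δ)‖x‖²`, where
`(A_I x)ᵢ = ∑_j A i j • xⱼ`. -/
theorem stmt_10 (m N d s : ℕ) (A : Matrix (Fin m) (Fin N) ℝ) (δ : ℝ)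
    (hRIP : ∀ u : Fin N → ℝ, {j | u j ≠ 0}.ncard ≤ s →
      (1 - δ) * ∑ j, (u j) ^ 2 ≤ ∑ i, (∑ j, A i j * u j) ^ 2 ∧
      ∑ i, (∑ j, A i j * u j) ^ 2 ≤ (1 + δ) * ∑ j, (u j) ^ 2)
    (W : Fin N → Submodule ℝ (EuclideanSpace ℝ (Fin d)))
    (x : Fin N → EuclideanSpace ℝ (Fin d)) (hxW : ∀ j, x j ∈ W j)
    (hxs : {j | x j ≠ 0}.ncard ≤ s) :
    (1 - δ) * ∑ j, ‖x j‖ ^ 2 ≤ ∑ i, ‖∑ j, A i j • x j‖ ^ 2 ∧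
    ∑ i, ‖∑ j, A i j • x j‖ ^ 2 ≤ (1 + δ) * ∑ j, ‖x j‖ ^ 2 := by
  have hnorm : ∀ v : EuclideanSpace ℝ (Fin d), ‖v‖ ^ 2 = ∑ k, (v k) ^ 2 := by
    intro v
    rw [EuclideanSpace.norm_eq, Real.sq_sqrt (by positivity)]
    simp [sq_abs]
  have happ : ∀ (i : Fin m) (k : Fin d),
      (∑ j, A i j • x j) k = ∑ j, A i j * x j k := by
    intro i k
    classical
    induction (Finset.univ : Finset (Fin N)) using Finset.induction with
    | empty => rfl
    | insert _ _ h ih => rw [Finset.sum_insert h, Finset.sum_insert h, ← ih]; rfl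
  -- per-coordinate RIP
  have hk : ∀ k : Fin d,
      (1 - δ) * ∑ j, (x j k) ^ 2 ≤ ∑ i, (∑ j, A i j * x j k) ^ 2 ∧
      ∑ i, (∑ j, A i j * x j k) ^ 2 ≤ (1 + δ) * ∑ j, (x j k) ^ 2 := by
    intro k
    apply hRIP
    refine le_trans (Set.ncard_le_ncard ?_ (Set.toFinite _)) hxs
    intro j hj
    simp only [Set.mem_setOf_eq] at hj ⊢
    intro h
    apply hj
    rw [h]; rfl
  have hL : ∑ j, ‖x j‖ ^ 2 = ∑ k, ∑ j, (x j k) ^ 2 := by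
    rw [Finset.sum_comm]
    exact Finset.sum_congr rfl fun j _ => hnorm (x j)
  have hR : ∑ i, ‖∑ j, A i j • x j‖ ^ 2 = ∑ k, ∑ i, (∑ j, A i j * x j k) ^ 2 := by
    rw [Finset.sum_comm]
    refine Finset.sum_congr rfl fun i _ => ?_
    rw [hnorm]
    exact Finset.sum_congr rfl fun k _ => by rw [happ]
  constructor
  · rw [hL, hR, Finset.mul_sum]
    exact Finset.sum_le_sum fun k _ => (hk k).1
  · rw [hL, hR, Finset.mul_sum]
    exact Finset.sum_le_sum fun k _ => (hk k).2
end

section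
/- Let Φ ∈ ℝ^{m'×dN} be a matrix whose restricted isometry constant θ_{2s} on the set of 2s-block-sparse vectors in ℋ satisfies θ_{2s} < √2 − 1. Then every s-block-sparse x ∈ ℋ is the unique minimizer of min_{z∈ℋ} ‖z‖_{2,1} subject to Φz = Φx. -/
open Finset

namespace Stmt19

variable {d N m' : ℕ}

noncomputable def nsq (u : Fin N → EuclideanSpace ℝ (Fin d)) : ℝ := ∑ j, ‖u j‖ ^ 2

lemma nsq_nonneg (u : Fin N → EuclideanSpace ℝ (Fin d)) : 0 ≤ nsq u :=
  Finset.sum_nonneg fun _ _ => sq_nonneg _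

lemma nsq_eq_zero {u : Fin N → EuclideanSpace ℝ (Fin d)} (h : nsq u = 0) : u = 0 := by
  have h2 := (Finset.sum_eq_zero_iff_of_nonneg (fun j (_ : j ∈ univ) => sq_nonneg ‖u j‖)).1 h
  funext j
  have := h2 j (mem_univ j)
  simpa [pow_eq_zero_iff] using this

noncomputable def ip (Φ : (Fin N → EuclideanSpace ℝ (Fin d)) →ₗ[ℝ] (Fin m' → ℝ))
    (u v : Fin N → EuclideanSpace ℝ (Fin d)) : ℝ := ∑ i, Φ u i * Φ v i

lemma ip_self (Φ : (Fin N → EuclideanSpace ℝ (Fin d)) →ₗ[ℝ] (Fin m' → ℝ)) (u) :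
    ip Φ u u = ∑ i, (Φ u i) ^ 2 := by
  simp [ip, sq]

lemma nsq_smul (c : ℝ) (u : Fin N → EuclideanSpace ℝ (Fin d)) :
    nsq (c • u) = c ^ 2 * nsq u := by
  unfold nsq
  rw [Finset.mul_sum]
  refine Finset.sum_congr rfl fun j _ => ?_
  rw [Pi.smul_apply, norm_smul, mul_pow, Real.norm_eq_abs, sq_abs]

lemma ip_smul (Φ : (Fin N → EuclideanSpace ℝ (Fin d)) →ₗ[ℝ] (Fin m' → ℝ))
    (a b : ℝ) (u v : Fin N → EuclideanSpace ℝ (Fin d)) :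
    ip Φ (a • u) (b • v) = a * b * ip Φ u v := by
  unfold ip
  rw [Finset.mul_sum]
  refine Finset.sum_congr rfl fun i _ => ?_
  rw [map_smul, map_smul, Pi.smul_apply, Pi.smul_apply, smul_eq_mul, smul_eq_mul]
  ring

lemma ip_add_left (Φ : (Fin N → EuclideanSpace ℝ (Fin d)) →ₗ[ℝ] (Fin m' → ℝ))
    (u v w : Fin N → EuclideanSpace ℝ (Fin d)) :
    ip Φ (u + v) w = ip Φ u w + ip Φ v w := by
  unfold ip
  rw [← Finset.sum_add_distrib]
  exact Finset.sum_congr rfl fun i _ => by rw [map_add, Pi.add_apply]; ring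

lemma ip_sub_right (Φ : (Fin N → EuclideanSpace ℝ (Fin d)) →ₗ[ℝ] (Fin m' → ℝ))
    (u v w : Fin N → EuclideanSpace ℝ (Fin d)) :
    ip Φ u (v - w) = ip Φ u v - ip Φ u w := by
  unfold ip
  rw [← Finset.sum_sub_distrib]
  exact Finset.sum_congr rfl fun i _ => by rw [map_sub, Pi.sub_apply]; ring

lemma ip_sum_right {α : Type*} (Φ : (Fin N → EuclideanSpace ℝ (Fin d)) →ₗ[ℝ] (Fin m' → ℝ))
    (u : Fin N → EuclideanSpace ℝ (Fin d)) (S : Finset α)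
    (f : α → (Fin N → EuclideanSpace ℝ (Fin d))) :
    ip Φ u (∑ a ∈ S, f a) = ∑ a ∈ S, ip Φ u (f a) := by
  unfold ip
  rw [Finset.sum_comm]
  refine Finset.sum_congr rfl fun i _ => ?_
  rw [map_sum, Finset.sum_apply, Finset.mul_sum]

lemma nsq_add_of_disj {u v : Fin N → EuclideanSpace ℝ (Fin d)}
    (hd : ∀ j, u j = 0 ∨ v j = 0) : nsq (u + v) = nsq u + nsq v := by
  unfold nsq
  rw [← Finset.sum_add_distrib]
  refine Finset.sum_congr rfl fun j _ => ?_
  rcases hd j with h | h <;> simp [h]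

lemma nsq_sub_of_disj {u v : Fin N → EuclideanSpace ℝ (Fin d)}
    (hd : ∀ j, u j = 0 ∨ v j = 0) : nsq (u - v) = nsq u + nsq v := by
  unfold nsq
  rw [← Finset.sum_add_distrib]
  refine Finset.sum_congr rfl fun j _ => ?_
  rcases hd j with h | h <;> simp [h]

lemma cross' (s : ℕ) (W : Fin N → Submodule ℝ (EuclideanSpace ℝ (Fin d)))
    (Φ : (Fin N → EuclideanSpace ℝ (Fin d)) →ₗ[ℝ] (Fin m' → ℝ)) (θ : ℝ)
    (hRIP : ∀ x : Fin N → EuclideanSpace ℝ (Fin d), (∀ j, x j ∈ W j) →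
      {j | x j ≠ 0}.ncard ≤ 2 * s →
      (1 - θ) * ∑ j, ‖x j‖ ^ 2 ≤ ∑ i, (Φ x i) ^ 2 ∧
      ∑ i, (Φ x i) ^ 2 ≤ (1 + θ) * ∑ j, ‖x j‖ ^ 2)
    (u v : Fin N → EuclideanSpace ℝ (Fin d))
    (hu : ∀ j, u j ∈ W j) (hv : ∀ j, v j ∈ W j)
    (hdisj : ∀ j, u j = 0 ∨ v j = 0)
    (hcard : {j | u j ≠ 0 ∨ v j ≠ 0}.ncard ≤ 2 * s) :
    |ip Φ u v| ≤ θ * (nsq u + nsq v) / 2 := by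
  have hsub : {j | (u + v) j ≠ 0}.ncard ≤ 2 * s := by
    refine le_trans (Set.ncard_le_ncard ?_ (Set.toFinite _)) hcard
    intro j hj
    simp only [Set.mem_setOf_eq] at hj ⊢
    by_contra hc
    push_neg at hc
    exact hj (by simp [Pi.add_apply, hc.1, hc.2])
  have hsub' : {j | (u - v) j ≠ 0}.ncard ≤ 2 * s := by
    refine le_trans (Set.ncard_le_ncard ?_ (Set.toFinite _)) hcard
    intro j hj
    simp only [Set.mem_setOf_eq] at hj ⊢
    by_contra hc
    push_neg at hc
    exact hj (by simp [Pi.sub_apply, hc.1, hc.2])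
  have huv : ∀ j, (u + v) j ∈ W j := fun j => (W j).add_mem (hu j) (hv j)
  have huv' : ∀ j, (u - v) j ∈ W j := fun j => (W j).sub_mem (hu j) (hv j)
  have R1 := hRIP (u + v) huv hsub
  have R2 := hRIP (u - v) huv' hsub'
  have hn1 : (∑ j, ‖(u + v) j‖ ^ 2) = nsq u + nsq v := nsq_add_of_disj hdisj
  have hn2 : (∑ j, ‖(u - v) j‖ ^ 2) = nsq u + nsq v := nsq_sub_of_disj hdisj
  rw [hn1] at R1; rw [hn2] at R2
  have hipadd : ∑ i, (Φ (u + v) i) ^ 2 = ∑ i, (Φ u i)^2 + 2 * ip Φ u v + ∑ i, (Φ v i)^2 := by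
    simp only [map_add, Pi.add_apply, ip]
    rw [Finset.mul_sum, ← Finset.sum_add_distrib, ← Finset.sum_add_distrib]
    exact Finset.sum_congr rfl fun i _ => by ring
  have hipsub : ∑ i, (Φ (u - v) i) ^ 2 = ∑ i, (Φ u i)^2 - 2 * ip Φ u v + ∑ i, (Φ v i)^2 := by
    simp only [map_sub, Pi.sub_apply, ip]
    rw [Finset.mul_sum, ← Finset.sum_sub_distrib, ← Finset.sum_add_distrib]
    exact Finset.sum_congr rfl fun i _ => by ring
  rw [abs_le]
  constructor <;> nlinarith [R1.1, R1.2, R2.1, R2.2]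

lemma cross (s : ℕ) (W : Fin N → Submodule ℝ (EuclideanSpace ℝ (Fin d)))
    (Φ : (Fin N → EuclideanSpace ℝ (Fin d)) →ₗ[ℝ] (Fin m' → ℝ)) (θ : ℝ) (hθ0 : 0 ≤ θ)
    (hRIP : ∀ x : Fin N → EuclideanSpace ℝ (Fin d), (∀ j, x j ∈ W j) →
      {j | x j ≠ 0}.ncard ≤ 2 * s →
      (1 - θ) * ∑ j, ‖x j‖ ^ 2 ≤ ∑ i, (Φ x i) ^ 2 ∧
      ∑ i, (Φ x i) ^ 2 ≤ (1 + θ) * ∑ j, ‖x j‖ ^ 2)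
    (u v : Fin N → EuclideanSpace ℝ (Fin d))
    (hu : ∀ j, u j ∈ W j) (hv : ∀ j, v j ∈ W j)
    (hdisj : ∀ j, u j = 0 ∨ v j = 0)
    (hcard : {j | u j ≠ 0 ∨ v j ≠ 0}.ncard ≤ 2 * s) :
    |ip Φ u v| ≤ θ * (Real.sqrt (nsq u) * Real.sqrt (nsq v)) := by
  by_cases hA : nsq u = 0
  · have : u = 0 := nsq_eq_zero hA
    subst this
    simp only [ip, map_zero, Pi.zero_apply, zero_mul, Finset.sum_const_zero, abs_zero]
    positivity
  by_cases hB : nsq v = 0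
  · have : v = 0 := nsq_eq_zero hB
    subst this
    simp only [ip, map_zero, Pi.zero_apply, mul_zero, Finset.sum_const_zero, abs_zero]
    positivity
  have hApos : 0 < nsq u := lt_of_le_of_ne (nsq_nonneg u) (Ne.symm hA)
  have hBpos : 0 < nsq v := lt_of_le_of_ne (nsq_nonneg v) (Ne.symm hB)
  set A := nsq u with hAdef
  set B := nsq v with hBdef
  have hsA : 0 < Real.sqrt A := Real.sqrt_pos.2 hApos
  have hsB : 0 < Real.sqrt B := Real.sqrt_pos.2 hBpos
  have hmulA : Real.sqrt A * Real.sqrt A = A := Real.mul_self_sqrt hApos.le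
  have hmulB : Real.sqrt B * Real.sqrt B = B := Real.mul_self_sqrt hBpos.le
  have key := cross' s W Φ θ hRIP (Real.sqrt B • u) (Real.sqrt A • v)
    (fun j => (W j).smul_mem _ (hu j)) (fun j => (W j).smul_mem _ (hv j))
    (fun j => by rcases hdisj j with h | h <;> simp [h])
    (by
      refine le_trans (Set.ncard_le_ncard ?_ (Set.toFinite _)) hcard
      intro j hj
      simp only [Set.mem_setOf_eq, Pi.smul_apply] at hj ⊢
      rcases hj with h | h
      · exact Or.inl fun h0 => h (by simp [h0])
      · exact Or.inr fun h0 => h (by simp [h0]))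
  rw [ip_smul, nsq_smul, nsq_smul, abs_mul, abs_of_pos (mul_pos hsB hsA)] at key
  have hsq : Real.sqrt B ^ 2 = B := Real.sq_sqrt hBpos.le
  have hsq' : Real.sqrt A ^ 2 = A := Real.sq_sqrt hApos.le
  rw [hsq, hsq'] at key
  have h2 : Real.sqrt B * Real.sqrt A * |ip Φ u v|
      ≤ Real.sqrt B * Real.sqrt A * (θ * (Real.sqrt A * Real.sqrt B)) := by
    rw [← hAdef, ← hBdef] at key
    have heq : Real.sqrt B * Real.sqrt A * (θ * (Real.sqrt A * Real.sqrt B))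
        = θ * ((Real.sqrt A * Real.sqrt A) * (Real.sqrt B * Real.sqrt B)) := by ring
    rw [heq, hmulA, hmulB]
    linarith [key]
  exact le_of_mul_le_mul_left h2 (mul_pos hsB hsA)


lemma split_sq (a0 a1 A0 A1 : ℝ) (h0 : a0 * a0 = A0) (h1 : a1 * a1 = A1) :
    (a0 + a1) ^ 2 ≤ 2 * (A0 + A1) := by nlinarith [sq_nonneg (a0 - a1)]

lemma fac_pos (θ : ℝ) (hθ : θ < Real.sqrt 2 - 1) : 0 < 1 - (1 + Real.sqrt 2) * θ := by
  nlinarith [Real.sq_sqrt (by norm_num : (0:ℝ) ≤ 2), Real.sqrt_nonneg 2]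

lemma U_nonpos (t U I : ℝ) (h1 : (1 - t) * U ≤ I) (h2 : I ≤ Real.sqrt 2 * t * U)
    (hU : 0 ≤ U) (hfac : 0 < 1 - (1 + Real.sqrt 2) * t) : U ≤ 0 := by nlinarith

end Stmt19

open Stmt19 Finset in
/-- RIP-based exact recovery for mixed ℓ₁/ℓ₂-minimization: if `Φ` satisfies the
restricted isometry property on `2s`-block-sparse vectors of
`ℋ = {x : xⱼ ∈ Wⱼ}` with constant `θ < √2 − 1`, then every `s`-block-sparse `x ∈ ℋ`
is the unique minimizer of `‖z‖_{2,1} = ∑_j ‖zⱼ‖₂` subject to `z ∈ ℋ` and `Φz = Φx`. -/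
theorem stmt_19 (m' d N k s : ℕ)
    (W : Fin N → Submodule ℝ (EuclideanSpace ℝ (Fin d)))
    (hk : ∀ j, Module.finrank ℝ (W j) = k)
    (Φ : (Fin N → EuclideanSpace ℝ (Fin d)) →ₗ[ℝ] (Fin m' → ℝ))
    (θ : ℝ) (hθ0 : 0 ≤ θ) (hθ : θ < Real.sqrt 2 - 1)
    (hRIP : ∀ x : Fin N → EuclideanSpace ℝ (Fin d), (∀ j, x j ∈ W j) →
      {j | x j ≠ 0}.ncard ≤ 2 * s →
      (1 - θ) * ∑ j, ‖x j‖ ^ 2 ≤ ∑ i, (Φ x i) ^ 2 ∧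
      ∑ i, (Φ x i) ^ 2 ≤ (1 + θ) * ∑ j, ‖x j‖ ^ 2) :
    ∀ x : Fin N → EuclideanSpace ℝ (Fin d), (∀ j, x j ∈ W j) →
      {j | x j ≠ 0}.ncard ≤ s →
      ∀ z : Fin N → EuclideanSpace ℝ (Fin d), (∀ j, z j ∈ W j) →
        Φ z = Φ x → z ≠ x → ∑ j, ‖x j‖ < ∑ j, ‖z j‖ := by
  classical
  intro x hx hxs z hz hPhiz hne
  by_contra hcon
  push_neg at hcon
  apply hne
  set h : Fin N → EuclideanSpace ℝ (Fin d) := z - x with hh_def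
  have hhW : ∀ j, h j ∈ W j := fun j => (W j).sub_mem (hz j) (hx j)
  have hΦh : Φ h = 0 := by rw [hh_def, map_sub, hPhiz, sub_self]
  have hzx : ∀ j, z j = x j + h j := fun j => by simp [hh_def]
  suffices hzero : ∀ j, h j = 0 by
    funext j
    have := hzero j
    rw [hh_def, Pi.sub_apply, sub_eq_zero] at this
    exact this
  rcases Nat.eq_zero_or_pos s with hs0 | hs
  · -- s = 0
    subst hs0
    have hx0 : ∀ j, x j = 0 := by
      intro j
      by_contra hj
      have hmem : j ∈ {j | x j ≠ 0} := hj
      have : {j | x j ≠ 0} = ∅ := by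
        rw [← Set.ncard_eq_zero (Set.toFinite _)]
        omega
      rw [this] at hmem
      exact hmem
    have hzn : ∑ j, ‖z j‖ ≤ 0 := by
      have : ∑ j, ‖x j‖ = 0 := Finset.sum_eq_zero fun j _ => by rw [hx0 j, norm_zero]
      linarith [hcon, this.le]
    have hz0 : ∀ j, z j = 0 := by
      have h0 : ∑ j, ‖z j‖ = 0 := le_antisymm hzn (Finset.sum_nonneg fun j _ => norm_nonneg _)
      intro j
      have := (Finset.sum_eq_zero_iff_of_nonneg
        (fun j (_ : j ∈ univ) => norm_nonneg (z j))).1 h0 j (mem_univ j)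
      simpa using this
    intro j
    rw [hh_def, Pi.sub_apply, hz0 j, hx0 j, sub_zero]
  -- main case s ≥ 1
  set T0 : Finset (Fin N) := Finset.univ.filter (fun j => x j ≠ 0) with hT0_def
  have hT0card : T0.card ≤ s := by
    have hset : {j | x j ≠ 0} = ↑T0 := by ext j; simp [hT0_def]
    rwa [hset, Set.ncard_coe_finset] at hxs
  have hxoff : ∀ j ∉ T0, x j = 0 := by
    intro j hj
    by_contra hc
    exact hj (by simp [hT0_def, hc])
  -- cone constraint
  have hcone : ∑ j ∈ T0ᶜ, ‖h j‖ ≤ ∑ j ∈ T0, ‖h j‖ := by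
    have e1 : ∑ j ∈ T0, ‖z j‖ + ∑ j ∈ T0ᶜ, ‖z j‖ = ∑ j, ‖z j‖ :=
      Finset.sum_add_sum_compl T0 _
    have e2 : ∑ j ∈ T0, ‖x j‖ + ∑ j ∈ T0ᶜ, ‖x j‖ = ∑ j, ‖x j‖ :=
      Finset.sum_add_sum_compl T0 _
    have e2' : ∑ j ∈ T0ᶜ, ‖x j‖ = 0 :=
      Finset.sum_eq_zero fun j hj => by rw [hxoff j (Finset.mem_compl.1 hj), norm_zero]
    have e3 : ∑ j ∈ T0ᶜ, ‖z j‖ = ∑ j ∈ T0ᶜ, ‖h j‖ :=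
      Finset.sum_congr rfl fun j hj => by
        rw [hzx j, hxoff j (Finset.mem_compl.1 hj), zero_add]
    have e4 : ∑ j ∈ T0, (‖x j‖ - ‖h j‖) ≤ ∑ j ∈ T0, ‖z j‖ := by
      refine Finset.sum_le_sum fun j _ => ?_
      have h5 : z j - h j = x j := by rw [hzx j]; abel
      have := norm_sub_le (z j) (h j)
      rw [h5] at this
      linarith
    rw [Finset.sum_sub_distrib] at e4
    linarith
  -- sorted enumeration of T0ᶜ
  set M : ℕ := Fintype.card ↥(T0ᶜ : Finset (Fin N)) with hM_def
  set e0 : ↥(T0ᶜ : Finset (Fin N)) ≃ Fin M := Fintype.equivFin _ with he0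
  set b0 : Fin M → ℝ := fun p => -‖h ↑(e0.symm p)‖ with hb0_def
  set σ : Equiv.Perm (Fin M) := Tuple.sort b0 with hσ
  set eqv : Fin M ≃ ↥(T0ᶜ : Finset (Fin N)) := σ.trans e0.symm with heqv
  set b : Fin M → ℝ := fun p => ‖h ↑(eqv p)‖ with hb_def
  have hb_nonneg : ∀ p, 0 ≤ b p := fun p => norm_nonneg _
  have hanti : ∀ p q : Fin M, p ≤ q → b q ≤ b p := by
    intro p q hpq
    have := Tuple.monotone_sort b0 hpq
    simp only [Function.comp_apply, hb0_def] at this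
    simp only [hb_def, heqv, Equiv.trans_apply]
    linarith
  -- chunks
  set C : ℕ → Finset (Fin M) :=
    fun i => Finset.univ.filter (fun p => i * s ≤ (p : ℕ) ∧ (p : ℕ) < (i + 1) * s) with hC_def
  have hinj : Function.Injective (fun p : Fin M => ((eqv p : ↥(T0ᶜ : Finset (Fin N))) : Fin N)) :=
    fun p q hpq => eqv.injective (Subtype.coe_injective hpq)
  set J : ℕ → Finset (Fin N) := fun i => (C i).image (fun p => ↑(eqv p)) with hJ_def
  set H : ℕ → (Fin N → EuclideanSpace ℝ (Fin d)) :=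
    fun i => fun j => if j ∈ J i then h j else 0 with hH_def
  set HT0 : Fin N → EuclideanSpace ℝ (Fin d) :=
    fun j => if j ∈ T0 then h j else 0 with hHT0_def
  have hJsub : ∀ i, J i ⊆ T0ᶜ := by
    intro i j hj
    obtain ⟨p, _, rfl⟩ := Finset.mem_image.1 hj
    exact (eqv p).2
  have hCcard : ∀ i, (C i).card ≤ s := by
    intro i
    have h1 : (C i).card ≤ (Finset.Ico (i * s) ((i + 1) * s)).card := by
      refine Finset.card_le_card_of_injOn (fun p => (p : ℕ)) ?_ ?_
      · intro p hp
        replace hp := Finset.mem_filter.1 hp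
        exact Finset.mem_Ico.2 ⟨hp.2.1, hp.2.2⟩
      · intro p _ q _ hpq
        exact Fin.ext hpq
    rw [Nat.card_Ico] at h1
    have : (i + 1) * s = i * s + s := by ring
    omega
  have hJcard : ∀ i, (J i).card ≤ s := by
    intro i
    rw [hJ_def]
    exact le_trans (Finset.card_image_le) (hCcard i)
  have hmemJ : ∀ (p : Fin M) (i : ℕ), ((eqv p : ↥(T0ᶜ : Finset (Fin N))) : Fin N) ∈ J i ↔ p ∈ C i := by
    intro p i
    constructor
    · intro hj
      obtain ⟨q, hq, hq2⟩ := Finset.mem_image.1 hj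
      have : q = p := hinj hq2
      rwa [← this]
    · intro hp
      exact Finset.mem_image_of_mem _ hp
  have hmemC : ∀ (p : Fin M) (i : ℕ), p ∈ C i ↔ i = (p : ℕ) / s := by
    intro p i
    simp only [hC_def, Finset.mem_filter, Finset.mem_univ, true_and]
    constructor
    · rintro ⟨h1, h2⟩
      exact (Nat.div_eq_of_lt_le h1 h2).symm
    · rintro rfl
      refine ⟨Nat.div_mul_le_self _ _, ?_⟩
      have h1 := Nat.div_add_mod (p : ℕ) s
      have h2 := Nat.mod_lt (p : ℕ) hs
      calc (p : ℕ) = s * ((p : ℕ) / s) + (p : ℕ) % s := h1.symm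
        _ < s * ((p : ℕ) / s) + s := by omega
        _ = ((p : ℕ) / s + 1) * s := by ring
  -- decomposition
  have hHioff : ∀ i j, j ∉ J i → H i j = 0 := by
    intro i j hj
    simp only [hH_def]
    rw [if_neg hj]
  have hHT0off : ∀ j, j ∉ T0 → HT0 j = 0 := by
    intro j hj
    simp only [hHT0_def]
    rw [if_neg hj]
  have hdecomp : ∀ j, h j = HT0 j + H 0 j + ∑ i ∈ Finset.Ico 1 M, H i j := by
    intro j
    by_cases hjT0 : j ∈ T0
    · have h1 : HT0 j = h j := by simp only [hHT0_def]; rw [if_pos hjT0]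
      have h2 : ∀ i, H i j = 0 := fun i =>
        hHioff i j (fun hji => (Finset.mem_compl.1 (hJsub i hji)) hjT0)
      rw [h1, h2 0, Finset.sum_eq_zero (fun i _ => h2 i)]
      simp
    · have hjc : j ∈ T0ᶜ := Finset.mem_compl.2 hjT0
      have hHT0j : HT0 j = 0 := hHT0off j hjT0
      set p : Fin M := eqv.symm ⟨j, hjc⟩ with hp_def
      have hpj : ((eqv p : ↥(T0ᶜ : Finset (Fin N))) : Fin N) = j := by
        rw [hp_def, Equiv.apply_symm_apply]
      have hJiff : ∀ i, j ∈ J i ↔ p ∈ C i := by intro i; rw [← hpj]; exact hmemJ p i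
      have hpC : p ∈ C ((p : ℕ) / s) := (hmemC p _).2 rfl
      have hHij : ∀ i, i ≠ (p : ℕ) / s → H i j = 0 := by
        intro i hi
        exact hHioff i j (fun hji => hi ((hmemC p i).1 ((hJiff i).1 hji)))
      have hHi0 : H ((p : ℕ) / s) j = h j := by
        simp only [hH_def]
        rw [if_pos ((hJiff _).2 hpC)]
      rcases Nat.eq_zero_or_pos ((p : ℕ) / s) with hi00 | hi0pos
      · have hH0j : H 0 j = h j := by rw [hi00] at hHi0; exact hHi0
        rw [hHT0j, hH0j, Finset.sum_eq_zero]
        · simp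
        · intro i hi
          apply hHij
          have := (Finset.mem_Ico.1 hi).1
          omega
      · have hH0j : H 0 j = 0 := hHij 0 (by omega)
        have hi0M : (p : ℕ) / s ∈ Finset.Ico 1 M := by
          rw [Finset.mem_Ico]
          exact ⟨hi0pos, lt_of_le_of_lt (Nat.div_le_self _ _) p.2⟩
        rw [hHT0j, hH0j,
          Finset.sum_eq_single_of_mem _ hi0M (fun i _ hi => hHij i hi), hHi0]
        simp
  -- support helper
  have hsupp : ∀ (S1 S2 : Finset (Fin N)) (v1 v2 : Fin N → EuclideanSpace ℝ (Fin d)),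
      (∀ j, j ∉ S1 → v1 j = 0) → (∀ j, j ∉ S2 → v2 j = 0) →
      {j | v1 j ≠ 0 ∨ v2 j ≠ 0}.ncard ≤ S1.card + S2.card := by
    intro S1 S2 v1 v2 h1 h2
    have hsub : {j | v1 j ≠ 0 ∨ v2 j ≠ 0} ⊆ ↑(S1 ∪ S2) := by
      intro j hj
      rcases hj with hj | hj
      · exact Finset.mem_coe.2 (Finset.mem_union_left _ (by by_contra hc; exact hj (h1 j hc)))
      · exact Finset.mem_coe.2 (Finset.mem_union_right _ (by by_contra hc; exact hj (h2 j hc)))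
    calc {j | v1 j ≠ 0 ∨ v2 j ≠ 0}.ncard
        ≤ (↑(S1 ∪ S2) : Set (Fin N)).ncard := Set.ncard_le_ncard hsub (Set.toFinite _)
      _ = (S1 ∪ S2).card := Set.ncard_coe_finset _
      _ ≤ S1.card + S2.card := Finset.card_union_le _ _
  -- head vector u
  set u : Fin N → EuclideanSpace ℝ (Fin d) := HT0 + H 0 with hu_def
  have hdisj01 : ∀ j, HT0 j = 0 ∨ H 0 j = 0 := by
    intro j
    by_cases hj : j ∈ T0
    · exact Or.inr (hHioff 0 j (fun hji => (Finset.mem_compl.1 (hJsub 0 hji)) hj))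
    · exact Or.inl (hHT0off j hj)
  have hU : nsq u = nsq HT0 + nsq (H 0) := nsq_add_of_disj hdisj01
  have hHT0W : ∀ j, HT0 j ∈ W j := by
    intro j
    simp only [hHT0_def]
    split
    · exact hhW j
    · exact (W j).zero_mem
  have hHiW : ∀ i j, H i j ∈ W j := by
    intro i j
    simp only [hH_def]
    split
    · exact hhW j
    · exact (W j).zero_mem
  have huW : ∀ j, u j ∈ W j := fun j => (W j).add_mem (hHT0W j) (hHiW 0 j)
  have hucard : {j | u j ≠ 0}.ncard ≤ 2 * s := by
    have hsub2 : {j | u j ≠ 0} ⊆ {j | HT0 j ≠ 0 ∨ H 0 j ≠ 0} := by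
      intro j hj
      by_contra hc
      simp only [Set.mem_setOf_eq] at hc
      push_neg at hc
      exact hj (show u j = 0 by rw [hu_def, Pi.add_apply, hc.1, hc.2, add_zero])
    calc {j | u j ≠ 0}.ncard ≤ {j | HT0 j ≠ 0 ∨ H 0 j ≠ 0}.ncard :=
        Set.ncard_le_ncard hsub2 (Set.toFinite _)
      _ ≤ T0.card + (J 0).card := hsupp T0 (J 0) HT0 (H 0) hHT0off (hHioff 0)
      _ ≤ 2 * s := by have := hJcard 0; omega
  have hlow : (1 - θ) * nsq u ≤ ip Φ u u := by
    rw [ip_self]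
    exact (hRIP u huW hucard).1
  -- ip u u = - sum of cross terms
  have hufun : u = h - ∑ i ∈ Finset.Ico 1 M, H i := by
    funext j
    rw [Pi.sub_apply, Finset.sum_apply, hdecomp j, hu_def, Pi.add_apply]
    abel
  have hipuh : ip Φ u h = 0 := by simp [ip, hΦh]
  have hipuu : ip Φ u u = - ∑ i ∈ Finset.Ico 1 M, ip Φ u (H i) := by
    have e := ip_sub_right Φ u h (∑ i ∈ Finset.Ico 1 M, H i)
    rw [← hufun] at e
    rw [e, hipuh, ip_sum_right]
    ring
  -- nsq of restricted vectors as sums of b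
  have hnsqH : ∀ i, nsq (H i) = ∑ p ∈ C i, (b p) ^ 2 := by
    intro i
    have e1 : nsq (H i) = ∑ j, (if j ∈ J i then ‖h j‖ ^ 2 else 0) := by
      unfold nsq
      refine Finset.sum_congr rfl fun j _ => ?_
      simp only [hH_def]
      split
      · rfl
      · simp
    rw [e1, Finset.sum_ite_mem, Finset.univ_inter]
    rw [hJ_def]
    rw [Finset.sum_image (fun p _ q _ hpq => hinj hpq)]
  have hnsqHT0 : nsq HT0 = ∑ j ∈ T0, ‖h j‖ ^ 2 := by
    have e1 : nsq HT0 = ∑ j, (if j ∈ T0 then ‖h j‖ ^ 2 else 0) := by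
      unfold nsq
      refine Finset.sum_congr rfl fun j _ => ?_
      simp only [hHT0_def]
      split
      · rfl
      · simp
    rw [e1, Finset.sum_ite_mem, Finset.univ_inter]
  have hspos : (0 : ℝ) < (s : ℝ) := by exact_mod_cast hs
  -- chunk step
  have hchunkstep : ∀ i ∈ Finset.Ico 1 M,
      Real.sqrt s * Real.sqrt (nsq (H i)) ≤ ∑ q ∈ C (i - 1), b q := by
    intro i hi
    have hi1 : 1 ≤ i := (Finset.mem_Ico.1 hi).1
    have hBnn : 0 ≤ ∑ q ∈ C (i - 1), b q := Finset.sum_nonneg fun q _ => hb_nonneg q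
    rcases Finset.eq_empty_or_nonempty (C i) with hCe | ⟨p0, hp0⟩
    · have hz' : nsq (H i) = 0 := by rw [hnsqH, hCe, Finset.sum_empty]
      rw [hz', Real.sqrt_zero, mul_zero]
      exact hBnn
    · -- every p ∈ C i satisfies s * b p ≤ ∑_{C (i-1)} b
      have hstep : ∀ p ∈ C i, (s : ℝ) * b p ≤ ∑ q ∈ C (i - 1), b q := by
        intro p hp
        have hpbounds := (Finset.mem_filter.1 hp).2
        have hpM : (p : ℕ) < M := p.2
        have hisle : i * s ≤ (p : ℕ) := hpbounds.1
        have hcardC : (C (i - 1)).card = s := by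
          have hIcoC : ∀ n ∈ Finset.Ico ((i - 1) * s) (i * s), n < M := by
            intro n hn
            have := (Finset.mem_Ico.1 hn).2
            have h2 : (i - 1 + 1) * s = i * s := by congr 1; omega
            omega
          have hcardeq : (C (i - 1)).card = (Finset.Ico ((i - 1) * s) (i * s)).card := by
            refine Finset.card_bij' (fun q _ => (q : ℕ)) (fun n hn => ⟨n, hIcoC n hn⟩)
              ?_ ?_ ?_ ?_
            · intro q hq
              have := (Finset.mem_filter.1 hq).2
              have h2 : (i - 1 + 1) * s = i * s := by congr 1; omega
              rw [Finset.mem_Ico]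
              exact ⟨this.1, h2 ▸ this.2⟩
            · intro n hn
              have hn' := Finset.mem_Ico.1 hn
              have h2 : (i - 1 + 1) * s = i * s := by congr 1; omega
              simp only [hC_def, Finset.mem_filter, Finset.mem_univ, true_and]
              refine ⟨hn'.1, ?_⟩
              rw [h2]
              exact hn'.2
            · intro q _
              rfl
            · intro n _
              rfl
          rw [hcardeq, Nat.card_Ico]
          have h2 : i * s = (i - 1) * s + s := by
            have h3 : i - 1 + 1 = i := by omega
            calc i * s = (i - 1 + 1) * s := by rw [h3]
              _ = (i - 1) * s + s := by ring
          omega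
        have hble : ∀ q ∈ C (i - 1), b p ≤ b q := by
          intro q hq
          have hqb := (Finset.mem_filter.1 hq).2
          have h2 : (i - 1 + 1) * s = i * s := by congr 1; omega
          have : (q : ℕ) ≤ (p : ℕ) := by omega
          exact hanti q p this
        calc (s : ℝ) * b p = (C (i - 1)).card * b p := by rw [hcardC]
          _ = ∑ q ∈ C (i - 1), b p := by rw [Finset.sum_const, nsmul_eq_mul]
          _ ≤ ∑ q ∈ C (i - 1), b q := Finset.sum_le_sum hble
      set B : ℝ := ∑ q ∈ C (i - 1), b q with hB_def
      have hbp : ∀ p ∈ C i, b p ≤ B / s := by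
        intro p hp
        rw [le_div_iff₀ hspos]
        rw [mul_comm]
        exact hstep p hp
      have hnsqle : nsq (H i) ≤ (s : ℝ) * (B / s) ^ 2 := by
        rw [hnsqH]
        calc ∑ p ∈ C i, (b p) ^ 2 ≤ ∑ p ∈ C i, (B / s) ^ 2 := by
              refine Finset.sum_le_sum fun p hp => ?_
              exact pow_le_pow_left₀ (hb_nonneg p) (hbp p hp) 2
          _ = (C i).card * (B / s) ^ 2 := by rw [Finset.sum_const, nsmul_eq_mul]
          _ ≤ (s : ℝ) * (B / s) ^ 2 := by
              refine mul_le_mul_of_nonneg_right ?_ (sq_nonneg _)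
              exact_mod_cast hCcard i
      have hBdiv : (s : ℝ) * ((s : ℝ) * (B / s) ^ 2) = B ^ 2 := by
        field_simp
      have hsnsq : (s : ℝ) * nsq (H i) ≤ B ^ 2 := by
        calc (s : ℝ) * nsq (H i) ≤ (s : ℝ) * ((s : ℝ) * (B / s) ^ 2) :=
            mul_le_mul_of_nonneg_left hnsqle hspos.le
          _ = B ^ 2 := hBdiv
      calc Real.sqrt s * Real.sqrt (nsq (H i)) = Real.sqrt ((s : ℝ) * nsq (H i)) :=
            (Real.sqrt_mul hspos.le _).symm
        _ ≤ Real.sqrt (B ^ 2) := Real.sqrt_le_sqrt hsnsq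
        _ = B := Real.sqrt_sq hBnn
  -- total chunk bound
  set SB : ℝ := ∑ i ∈ Finset.Ico 1 M, Real.sqrt (nsq (H i)) with hSB_def
  have hSB_nonneg : 0 ≤ SB := Finset.sum_nonneg fun i _ => Real.sqrt_nonneg _
  have hchunktotal : Real.sqrt s * SB ≤ ∑ j ∈ T0ᶜ, ‖h j‖ := by
    rw [hSB_def, Finset.mul_sum]
    refine le_trans (Finset.sum_le_sum hchunkstep) ?_
    have hCdisj : ∀ a ∈ Finset.Ico 1 M, ∀ a' ∈ Finset.Ico 1 M, a ≠ a' →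
        Disjoint (C (a - 1)) (C (a' - 1)) := by
      intro a ha a' ha' hne'
      rw [Finset.disjoint_left]
      intro q hq hq'
      have h1 := (hmemC q (a - 1)).1 hq
      have h2 := (hmemC q (a' - 1)).1 hq'
      have ha1 := (Finset.mem_Ico.1 ha).1
      have ha1' := (Finset.mem_Ico.1 ha').1
      omega
    rw [← Finset.sum_biUnion hCdisj]
    have huniv : ∑ q ∈ (Finset.Ico 1 M).biUnion (fun i => C (i - 1)), b q
        ≤ ∑ q : Fin M, b q :=
      Finset.sum_le_sum_of_subset_of_nonneg (Finset.subset_univ _)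
        (fun q _ _ => hb_nonneg q)
    refine le_trans huniv (le_of_eq ?_)
    rw [← Finset.sum_coe_sort (T0ᶜ) (fun j => ‖h j‖)]
    exact Equiv.sum_comp eqv (fun t => ‖h ↑t‖)
  -- ℓ¹–ℓ² bound on T0
  have hL1T0 : ∑ j ∈ T0, ‖h j‖ ≤ Real.sqrt s * Real.sqrt (nsq HT0) := by
    have cs := Finset.sum_mul_sq_le_sq_mul_sq T0 (fun j => ‖h j‖) (fun _ => 1)
    simp only [mul_one, one_pow, Finset.sum_const, nsmul_eq_mul] at cs
    have hsum_nonneg : 0 ≤ ∑ j ∈ T0, ‖h j‖ := Finset.sum_nonneg fun j _ => norm_nonneg _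
    have hsq_le : (∑ j ∈ T0, ‖h j‖) ^ 2 ≤ nsq HT0 * s := by
      rw [hnsqHT0]
      calc (∑ j ∈ T0, ‖h j‖) ^ 2 ≤ (∑ j ∈ T0, ‖h j‖ ^ 2) * (T0.card : ℝ) := cs
        _ ≤ (∑ j ∈ T0, ‖h j‖ ^ 2) * (s : ℝ) := by
            refine mul_le_mul_of_nonneg_left ?_ (Finset.sum_nonneg fun j _ => sq_nonneg _)
            exact_mod_cast hT0card
    calc ∑ j ∈ T0, ‖h j‖ = Real.sqrt ((∑ j ∈ T0, ‖h j‖) ^ 2) :=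
          (Real.sqrt_sq hsum_nonneg).symm
      _ ≤ Real.sqrt (nsq HT0 * s) := Real.sqrt_le_sqrt hsq_le
      _ = Real.sqrt (nsq HT0) * Real.sqrt s := Real.sqrt_mul (nsq_nonneg _) _
      _ = Real.sqrt s * Real.sqrt (nsq HT0) := mul_comm _ _
  clear_value SB u HT0 H J C b eqv σ b0 e0 h
  -- SB ≤ √(nsq HT0)
  have hsqrts : (0 : ℝ) < Real.sqrt s := Real.sqrt_pos.2 hspos
  have hSBle : SB ≤ Real.sqrt (nsq HT0) := by
    have hchain : Real.sqrt s * SB ≤ Real.sqrt s * Real.sqrt (nsq HT0) :=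
      le_trans hchunktotal (le_trans hcone hL1T0)
    exact le_of_mul_le_mul_left hchain hsqrts
  -- cross-term bounds
  have hdisjT0i : ∀ i, ∀ j, HT0 j = 0 ∨ H i j = 0 := by
    intro i j
    by_cases hj : j ∈ T0
    · exact Or.inr (hHioff i j (fun hji => (Finset.mem_compl.1 (hJsub i hji)) hj))
    · exact Or.inl (hHT0off j hj)
  have hdisj0i : ∀ i, 1 ≤ i → ∀ j, H 0 j = 0 ∨ H i j = 0 := by
    intro i hi1 j
    by_cases hj : j ∈ J 0
    · refine Or.inr (hHioff i j fun hji => ?_)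
      simp only [hJ_def] at hj
      obtain ⟨p, hp, rfl⟩ := Finset.mem_image.1 hj
      have hpi := (hmemC p i).1 ((hmemJ p i).1 hji)
      have hp0 := (hmemC p 0).1 hp
      omega
    · exact Or.inl (hHioff 0 j hj)
  have hcross : ∀ i ∈ Finset.Ico 1 M, - ip Φ u (H i)
      ≤ θ * ((Real.sqrt (nsq HT0) + Real.sqrt (nsq (H 0))) * Real.sqrt (nsq (H i))) := by
    intro i hi
    have hi1 : 1 ≤ i := (Finset.mem_Ico.1 hi).1
    have c1 := cross s W Φ θ hθ0 hRIP HT0 (H i) hHT0W (hHiW i) (hdisjT0i i)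
      (le_trans (hsupp T0 (J i) HT0 (H i) hHT0off (hHioff i))
        (by have := hJcard i; omega))
    have c2 := cross s W Φ θ hθ0 hRIP (H 0) (H i) (hHiW 0) (hHiW i) (hdisj0i i hi1)
      (le_trans (hsupp (J 0) (J i) (H 0) (H i) (hHioff 0) (hHioff i))
        (by have := hJcard 0; have := hJcard i; omega))
    have e : ip Φ u (H i) = ip Φ HT0 (H i) + ip Φ (H 0) (H i) := by
      rw [hu_def]
      exact ip_add_left Φ HT0 (H 0) (H i)
    rw [e]
    have g1 := (abs_le.1 c1).1
    have g2 := (abs_le.1 c2).1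
    have hexp : θ * ((Real.sqrt (nsq HT0) + Real.sqrt (nsq (H 0))) * Real.sqrt (nsq (H i)))
        = θ * (Real.sqrt (nsq HT0) * Real.sqrt (nsq (H i)))
          + θ * (Real.sqrt (nsq (H 0)) * Real.sqrt (nsq (H i))) := by ring
    rw [hexp]
    linarith
  have hsum1 : ip Φ u u
      ≤ θ * ((Real.sqrt (nsq HT0) + Real.sqrt (nsq (H 0))) * SB) := by
    rw [hipuu]
    calc - ∑ i ∈ Finset.Ico 1 M, ip Φ u (H i)
        = ∑ i ∈ Finset.Ico 1 M, -(ip Φ u (H i)) := by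
          rw [Finset.sum_neg_distrib]
      _ ≤ ∑ i ∈ Finset.Ico 1 M,
            θ * ((Real.sqrt (nsq HT0) + Real.sqrt (nsq (H 0))) * Real.sqrt (nsq (H i))) :=
          Finset.sum_le_sum hcross
      _ = θ * ((Real.sqrt (nsq HT0) + Real.sqrt (nsq (H 0))) * SB) := by
          rw [hSB_def, Finset.mul_sum, Finset.mul_sum]
  -- √A0 + √A1 ≤ √2 √U
  have hA0n := nsq_nonneg HT0
  have hA1n := nsq_nonneg (H 0)
  have hsplit : Real.sqrt (nsq HT0) + Real.sqrt (nsq (H 0))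
      ≤ Real.sqrt 2 * Real.sqrt (nsq u) := by
    have m0 : Real.sqrt (nsq HT0) * Real.sqrt (nsq HT0) = nsq HT0 :=
      Real.mul_self_sqrt hA0n
    have m1 : Real.sqrt (nsq (H 0)) * Real.sqrt (nsq (H 0)) = nsq (H 0) :=
      Real.mul_self_sqrt hA1n
    have key : (Real.sqrt (nsq HT0) + Real.sqrt (nsq (H 0))) ^ 2 ≤ 2 * nsq u := by
      rw [hU]
      exact split_sq _ _ _ _ m0 m1
    calc Real.sqrt (nsq HT0) + Real.sqrt (nsq (H 0))
        = Real.sqrt ((Real.sqrt (nsq HT0) + Real.sqrt (nsq (H 0))) ^ 2) :=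
          (Real.sqrt_sq (by positivity)).symm
      _ ≤ Real.sqrt (2 * nsq u) := Real.sqrt_le_sqrt key
      _ = Real.sqrt 2 * Real.sqrt (nsq u) := Real.sqrt_mul (by norm_num) _
  have hsqA0leU : Real.sqrt (nsq HT0) ≤ Real.sqrt (nsq u) :=
    Real.sqrt_le_sqrt (by rw [hU]; linarith)
  have hfinal : ip Φ u u ≤ Real.sqrt 2 * θ * nsq u := by
    have t1 : SB ≤ Real.sqrt (nsq u) := le_trans hSBle hsqA0leU
    have t2 : (Real.sqrt (nsq HT0) + Real.sqrt (nsq (H 0))) * SB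
        ≤ (Real.sqrt 2 * Real.sqrt (nsq u)) * Real.sqrt (nsq u) :=
      mul_le_mul hsplit t1 hSB_nonneg (by positivity)
    have t3 : (Real.sqrt 2 * Real.sqrt (nsq u)) * Real.sqrt (nsq u) = Real.sqrt 2 * nsq u := by
      rw [mul_assoc, Real.mul_self_sqrt (nsq_nonneg u)]
    calc ip Φ u u ≤ θ * ((Real.sqrt (nsq HT0) + Real.sqrt (nsq (H 0))) * SB) := hsum1
      _ ≤ θ * (Real.sqrt 2 * nsq u) := by
          rw [← t3]
          exact mul_le_mul_of_nonneg_left t2 hθ0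
      _ = Real.sqrt 2 * θ * nsq u := by ring
  have hfac : 0 < 1 - (1 + Real.sqrt 2) * θ := fac_pos θ hθ
  have hUzero : nsq u ≤ 0 := U_nonpos θ (nsq u) (ip Φ u u) hlow hfinal (nsq_nonneg u) hfac
  have hU0 : nsq u = 0 := le_antisymm hUzero (nsq_nonneg u)
  have hA0z : nsq HT0 = 0 := by
    rw [hU0] at hU
    linarith
  have hHT0z : HT0 = 0 := nsq_eq_zero hA0z
  have hT0zero : ∀ j ∈ T0, h j = 0 := by
    intro j hj
    have hz0 : HT0 j = 0 := by rw [hHT0z]; rfl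
    simp only [hHT0_def] at hz0
    rwa [if_pos hj] at hz0
  have hsumT0 : ∑ j ∈ T0, ‖h j‖ = 0 :=
    Finset.sum_eq_zero fun j hj => by rw [hT0zero j hj, norm_zero]
  have hsumT0c : ∑ j ∈ T0ᶜ, ‖h j‖ = 0 := by
    have := hcone
    rw [hsumT0] at this
    exact le_antisymm this (Finset.sum_nonneg fun j _ => norm_nonneg _)
  intro j
  by_cases hj : j ∈ T0
  · exact hT0zero j hj
  · have hjc : j ∈ T0ᶜ := Finset.mem_compl.2 hj
    have := (Finset.sum_eq_zero_iff_of_nonneg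
      (fun j _ => norm_nonneg (h j))).1 hsumT0c j hjc
    simpa using this
end
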